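/- Let θ₀ = 1 and suppose the positive sequence {θ_k} satisfies θ_{k+1} − θ_k ≤ −θ_k^ν θ_{k+1}/√(Q θ_k + R²) with Q > 0, R ≥ 0, ν > 1/2, and θ_{k+1}/θ_k ≥ δ > 0 for all k. Then θ_k ≤ (4√Q/(4√Q + δ(2ν−1)k))^{2/(2ν−1)} + (2R/(2R + δν k))^{1/ν} for all k ≥ 0. -/

import Mathlib

set_option maxHeartbeats 1000000

/-- Bernoulli-type bound: for `0 < y ≤ x` and `0 ≤ r`,
`x ^ (-r) + r * x ^ (-r-1) * (x - y) ≤ y ^ (-r)`. -/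
lemma rpow_neg_convex_lower {x y r : ℝ} (hy : 0 < y) (hxy : y ≤ x) (hr : 0 ≤ r) :
    x ^ (-r) + r * x ^ (-r - 1) * (x - y) ≤ y ^ (-r) := by
  have hx : 0 < x := lt_of_lt_of_le hy hxy
  have hu : 0 < y / x := div_pos hy hx
  -- key : 1 + r*(1 - y/x) ≤ (y/x) ^ (-r)
  have key : 1 + r * (1 - y / x) ≤ (y / x) ^ (-r) := by
    have hlog : Real.log (y / x) ≤ y / x - 1 := Real.log_le_sub_one_of_pos hu
    have h2 : Real.log (y / x) * (-r) + 1 ≤ Real.exp (Real.log (y / x) * (-r)) :=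
      Real.add_one_le_exp _
    have h3 : (y / x) ^ (-r) = Real.exp (Real.log (y / x) * (-r)) :=
      Real.rpow_def_of_pos hu _
    rw [h3]
    nlinarith [mul_nonneg hr (sub_nonneg.mpr hlog)]
  have hxr : (0 : ℝ) < x ^ (-r) := Real.rpow_pos_of_pos hx _
  have hsplit : (y / x) ^ (-r) = y ^ (-r) / x ^ (-r) := Real.div_rpow hy.le hx.le _
  have hmul : x ^ (-r) * (1 + r * (1 - y / x)) ≤ y ^ (-r) := by
    calc x ^ (-r) * (1 + r * (1 - y / x)) ≤ x ^ (-r) * ((y / x) ^ (-r)) :=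
          mul_le_mul_of_nonneg_left key hxr.le
      _ = y ^ (-r) := by rw [hsplit]; field_simp
  have hxr1 : x ^ (-r - 1) = x ^ (-r) * x⁻¹ := by
    rw [show (-r - 1 : ℝ) = -r + (-1) by ring, Real.rpow_add hx, Real.rpow_neg_one]
  have : x ^ (-r) * (1 + r * (1 - y / x)) = x ^ (-r) + r * x ^ (-r - 1) * (x - y) := by
    rw [hxr1]; field_simp
  linarith [hmul, this.symm.le]

/-- Technical sequence estimate (case `ν > 1/2`): if
`θ_{k+1} − θ_k ≤ −θ_k^ν θ_{k+1}/√(Qθ_k + R²)` and `θ_{k+1}/θ_k ≥ δ > 0`, then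
`θ_k ≤ (4√Q/(4√Q + δ(2ν−1)k))^{2/(2ν−1)} + (2R/(2R + δνk))^{1/ν}`. -/
theorem theta_estimate_nu_gt_half (θ : ℕ → ℝ) (Q R ν δ : ℝ)
    (hQ : 0 < Q) (hR : 0 ≤ R) (hν : 1/2 < ν) (hδ : 0 < δ)
    (hpos : ∀ k, 0 < θ k) (hθ0 : θ 0 = 1)
    (hratio : ∀ k, θ (k+1) / θ k ≥ δ)
    (hrec : ∀ k, θ (k+1) - θ k ≤
      -((θ k ^ ν) * θ (k+1)) / Real.sqrt (Q * θ k + R^2)) :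
    ∀ k : ℕ, θ k ≤
      (4 * Real.sqrt Q / (4 * Real.sqrt Q + δ * (2*ν - 1) * k)) ^ (2 / (2*ν - 1))
      + (2 * R / (2 * R + δ * ν * k)) ^ (1 / ν) := by
  have hν0 : 0 < ν := by linarith
  obtain ⟨p, hpdef⟩ : ∃ p : ℝ, p = ν - 1/2 := ⟨_, rfl⟩
  have hp0 : 0 < p := by rw [hpdef]; linarith
  have hsQ : 0 < Real.sqrt Q := Real.sqrt_pos.mpr hQ
  -- basic monotonicity facts
  have hmono : ∀ k, θ (k+1) ≤ θ k := by
    intro k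
    have h := hrec k
    have hS : 0 < Real.sqrt (Q * θ k + R^2) :=
      Real.sqrt_pos.mpr (by nlinarith [hpos k, sq_nonneg R])
    have hnum : 0 < θ k ^ ν * θ (k+1) :=
      mul_pos (Real.rpow_pos_of_pos (hpos k) _) (hpos (k+1))
    have hq : 0 < (θ k ^ ν * θ (k+1)) / Real.sqrt (Q * θ k + R^2) := div_pos hnum hS
    have hneg : -(θ k ^ ν * θ (k+1)) / Real.sqrt (Q * θ k + R^2)
        = -((θ k ^ ν * θ (k+1)) / Real.sqrt (Q * θ k + R^2)) := neg_div _ _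
    linarith [h.trans_eq hneg]
  have hdelta : ∀ k, δ * θ k ≤ θ (k+1) := by
    intro k
    have := hratio k
    rw [ge_iff_le, le_div_iff₀ (hpos k)] at this
    linarith
  -- the potential
  obtain ⟨Φ, hΦdef⟩ : ∃ Φ : ℕ → ℝ, Φ = fun k =>
    Real.sqrt Q * (θ k ^ (-p) - 1) / p + R * (θ k ^ (-ν) - 1) / ν := ⟨_, rfl⟩
  -- one-step estimate
  have hstep : ∀ k, Φ k + δ ≤ Φ (k+1) := by
    intro k
    set x := θ k with hx'
    set y := θ (k+1) with hy'
    have hx : 0 < x := hpos k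
    have hy : 0 < y := hpos (k+1)
    have hxy : y ≤ x := hmono k
    set S := Real.sqrt (Q * x + R^2) with hS'
    have hS : 0 < S := Real.sqrt_pos.mpr (by nlinarith [sq_nonneg R])
    -- decrement lower bound
    have hΔ : δ * x ^ (ν + 1) / S ≤ x - y := by
      have h1 : x ^ ν * y ≥ x ^ ν * (δ * x) :=
        mul_le_mul_of_nonneg_left (hdelta k) (Real.rpow_pos_of_pos hx ν).le
      have h2 : x ^ ν * (δ * x) = δ * x ^ (ν + 1) := by
        rw [Real.rpow_add_one hx.ne' ν]; ring
      have h3 : x ^ ν * y / S ≤ x - y := by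
        have := hrec k
        have : y - x ≤ -(x ^ ν * y) / S := this
        have hd : -(x ^ ν * y) / S = -(x ^ ν * y / S) := by ring
        linarith [this.trans_eq hd]
      have h4 : δ * x ^ (ν + 1) ≤ x ^ ν * y := by
        calc δ * x ^ (ν + 1) = x ^ ν * (δ * x) := h2.symm
          _ ≤ x ^ ν * y := h1
      exact le_trans ((div_le_div_iff_of_pos_right hS).mpr h4) h3
    have hΔ0 : 0 ≤ x - y := by linarith
    -- convexity bounds
    have h1 : x ^ (-p) + p * x ^ (-p - 1) * (x - y) ≤ y ^ (-p) :=
      rpow_neg_convex_lower hy hxy hp0.le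
    have h2 : x ^ (-ν) + ν * x ^ (-ν - 1) * (x - y) ≤ y ^ (-ν) :=
      rpow_neg_convex_lower hy hxy hν0.le
    -- key algebraic computation
    have hkey : Real.sqrt Q * x ^ (-p - 1) * (x - y) + R * x ^ (-ν - 1) * (x - y) ≥ δ := by
      have e1 : x ^ (-p - 1) * x ^ (ν + 1) = Real.sqrt x := by
        rw [← Real.rpow_add hx, show (-p - 1) + (ν + 1) = (1/2 : ℝ) by
          rw [hpdef]; ring, ← Real.sqrt_eq_rpow]
      have e2 : x ^ (-ν - 1) * x ^ (ν + 1) = 1 := by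
        rw [← Real.rpow_add hx, show (-ν - 1) + (ν + 1) = (0 : ℝ) by ring, Real.rpow_zero]
      have hSle : S ≤ Real.sqrt Q * Real.sqrt x + R := by
        have hsx : 0 ≤ Real.sqrt Q * Real.sqrt x := by positivity
        have h' : Q * x + R^2 ≤ (Real.sqrt Q * Real.sqrt x + R)^2 := by
          have hQx : (Real.sqrt Q * Real.sqrt x)^2 = Q * x := by
            rw [mul_pow, Real.sq_sqrt hQ.le, Real.sq_sqrt hx.le]
          nlinarith [mul_nonneg hsx hR]
        calc S ≤ Real.sqrt ((Real.sqrt Q * Real.sqrt x + R)^2) := Real.sqrt_le_sqrt h'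
          _ = Real.sqrt Q * Real.sqrt x + R := Real.sqrt_sq (by positivity)
      -- combine
      have hc1 : Real.sqrt Q * x ^ (-p - 1) * (x - y) + R * x ^ (-ν - 1) * (x - y)
          ≥ (Real.sqrt Q * x ^ (-p - 1) + R * x ^ (-ν - 1)) * (δ * x ^ (ν + 1) / S) := by
        have hco : 0 ≤ Real.sqrt Q * x ^ (-p - 1) + R * x ^ (-ν - 1) := by
          have := Real.rpow_pos_of_pos hx (-p - 1)
          have := Real.rpow_pos_of_pos hx (-ν - 1)
          positivity
        nlinarith [mul_le_mul_of_nonneg_left hΔ hco]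
      have hc2 : (Real.sqrt Q * x ^ (-p - 1) + R * x ^ (-ν - 1)) * (δ * x ^ (ν + 1) / S)
          = δ * (Real.sqrt Q * Real.sqrt x + R) / S := by
        have expand : (Real.sqrt Q * x ^ (-p - 1) + R * x ^ (-ν - 1)) * (δ * x ^ (ν + 1) / S)
            = δ * (Real.sqrt Q * (x ^ (-p - 1) * x ^ (ν + 1))
                + R * (x ^ (-ν - 1) * x ^ (ν + 1))) / S := by ring
        rw [expand, e1, e2, mul_one]
      have hc3 : δ * (Real.sqrt Q * Real.sqrt x + R) / S ≥ δ := by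
        rw [ge_iff_le, le_div_iff₀ hS]
        nlinarith [hSle]
      linarith [hc1, hc2.le, hc2.ge, hc3]
    -- put things together
    have hA : Real.sqrt Q * (y ^ (-p) - 1) / p - Real.sqrt Q * (x ^ (-p) - 1) / p
        ≥ Real.sqrt Q * x ^ (-p - 1) * (x - y) := by
      have h1' : p * (x ^ (-p - 1) * (x - y)) ≤ y ^ (-p) - x ^ (-p) := by linarith
      have hmul := mul_le_mul_of_nonneg_left h1' hsQ.le
      rw [ge_iff_le, show Real.sqrt Q * (y ^ (-p) - 1) / p - Real.sqrt Q * (x ^ (-p) - 1) / p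
          = Real.sqrt Q * (y ^ (-p) - x ^ (-p)) / p by ring, le_div_iff₀ hp0]
      linarith [hmul]
    have hB : R * (y ^ (-ν) - 1) / ν - R * (x ^ (-ν) - 1) / ν
        ≥ R * x ^ (-ν - 1) * (x - y) := by
      have h2' : ν * (x ^ (-ν - 1) * (x - y)) ≤ y ^ (-ν) - x ^ (-ν) := by linarith
      have hmul := mul_le_mul_of_nonneg_left h2' hR
      rw [ge_iff_le, show R * (y ^ (-ν) - 1) / ν - R * (x ^ (-ν) - 1) / ν
          = R * (y ^ (-ν) - x ^ (-ν)) / ν by ring, le_div_iff₀ hν0]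
      linarith [hmul]
    have : Φ (k+1) - Φ k ≥ δ := by
      have hexp : Φ (k+1) - Φ k
          = (Real.sqrt Q * (y ^ (-p) - 1) / p - Real.sqrt Q * (x ^ (-p) - 1) / p)
            + (R * (y ^ (-ν) - 1) / ν - R * (x ^ (-ν) - 1) / ν) := by
        rw [hΦdef]; ring
      rw [hexp]
      linarith [hA, hB, hkey]
    linarith
  -- accumulate
  have hΦlb : ∀ k : ℕ, δ * k ≤ Φ k := by
    intro k
    induction k with
    | zero => rw [hΦdef]; simp [hθ0, Real.one_rpow]
    | succ n ih =>
      have := hstep n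
      push_cast
      have : δ * (n + 1 : ℝ) = δ * n + δ := by ring
      rw [this]
      linarith [hstep n, ih]
  -- conclusion
  intro k
  by_contra hcon
  push_neg at hcon
  set A : ℝ := 4 * Real.sqrt Q with hA'
  set c : ℝ := δ * (2*ν - 1) with hc'
  have hc0 : 0 < c := by simp only [hc']; nlinarith
  have hD : 0 < A + c * k := by positivity
  set a : ℝ := (A / (A + c * k)) ^ (2 / (2*ν - 1)) with ha'
  set b : ℝ := (2 * R / (2 * R + δ * ν * k)) ^ (1 / ν) with hb'
  have ha0 : 0 < a := Real.rpow_pos_of_pos (div_pos (by positivity) hD) _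
  have hb0 : 0 ≤ b := Real.rpow_nonneg (by positivity) _
  have hθa : a < θ k := by linarith
  have hθb : b < θ k := by linarith
  -- first term estimate
  have hexp1 : (2 / (2*ν - 1) : ℝ) = 1 / p := by
    rw [hpdef, div_eq_div_iff (by linarith) (by linarith)]; ring
  have hap : a ^ (-p) = (A + c * k) / A := by
    rw [ha', hexp1, ← Real.rpow_mul (le_of_lt (div_pos (by positivity) hD)),
      show (1/p) * (-p) = (-1 : ℝ) by field_simp, Real.rpow_neg_one]
    rw [inv_div]
  have hT1 : Real.sqrt Q * (θ k ^ (-p) - 1) / p < δ * k / 2 := by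
    have h1 : θ k ^ (-p) < a ^ (-p) :=
      Real.rpow_lt_rpow_of_neg ha0 hθa (by linarith)
    rw [hap] at h1
    have h2 : (A + c * k) / A - 1 = c * k / A := by rw [div_sub_one (by rw [hA']; positivity)]; ring
    have h3 : Real.sqrt Q * (c * k / A) / p = δ * k / 2 := by
      have hne1 : Real.sqrt Q ≠ 0 := hsQ.ne'
      have hne2 : (ν - 1/2 : ℝ) ≠ 0 := by intro h; rw [sub_eq_zero] at h; linarith [h.symm]
      have e1 : Real.sqrt Q * (c * (k:ℝ) / A) = c * (k:ℝ) / 4 := by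
        rw [hA']; field_simp
      have e2 : c * (k:ℝ) / 4 / p = δ * (k:ℝ) / 2 := by
        rw [hc', hpdef, div_div,
          div_eq_div_iff (ne_of_gt (by linarith : (0:ℝ) < 4 * (ν - 1/2))) two_ne_zero]
        ring
      rw [e1, e2]
    rw [div_lt_iff₀ hp0, ← h3, div_mul_cancel₀ _ hp0.ne']
    have hk0 : (0:ℝ) ≤ (k:ℝ) := Nat.cast_nonneg k
    nlinarith [h1, h2]
  -- second term estimate
  have hT2 : R * (θ k ^ (-ν) - 1) / ν ≤ δ * k / 2 := by
    rcases eq_or_lt_of_le hR with hR0 | hRpos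
    · rw [← hR0]
      simp
      positivity
    · have hE : 0 < 2 * R + δ * ν * k := by positivity
      have hb0' : 0 < b := Real.rpow_pos_of_pos (div_pos (by positivity) hE) _
      have hbν : b ^ (-ν) = (2 * R + δ * ν * k) / (2 * R) := by
        rw [hb', ← Real.rpow_mul (le_of_lt (div_pos (by positivity) hE)),
          show (1/ν) * (-ν) = (-1 : ℝ) by field_simp, Real.rpow_neg_one]
        rw [inv_div]
      have h1 : θ k ^ (-ν) < b ^ (-ν) :=
        Real.rpow_lt_rpow_of_neg hb0' hθb (by linarith)
      rw [hbν] at h1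
      have h2 : (2 * R + δ * ν * k) / (2 * R) - 1 = δ * ν * k / (2 * R) := by
        field_simp
        ring
      have h3 : R * (δ * ν * k / (2 * R)) / ν = δ * k / 2 := by
        field_simp
      rw [div_le_iff₀ hν0, ← h3, div_mul_cancel₀ _ hν0.ne']
      nlinarith [h1, h2]
  have := hΦlb k
  have hΦk : Φ k = Real.sqrt Q * (θ k ^ (-p) - 1) / p + R * (θ k ^ (-ν) - 1) / ν := by
    rw [hΦdef]
  -- contradiction: δ k ≤ Φ k < δk/2 + δk/2
  have hlt : Φ k < δ * k := by
    rw [hΦk]; linarith [hT1, hT2]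
  linarith
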